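/- Let K be a field, n ≥ 2 an integer, and ζ ∈ K an element with ζ^n = −1. Suppose (x, y, s) ∈ K³ satisfies s ≠ 0 and s^n = f_n(x,y), where f_n(x,y) = (xy)^{n−1}(1−x)(1−y)(1−xy)^{n−1} (this forces x ≠ 0, y ≠ 0, x ≠ 1, y ≠ 1 and xy ≠ 1). Define x′ = 1 − x, y′ = 1/(1 − xy), and s′ = ζ(1−x)(1−y)x²y / (s(1−xy)). Then s′ ≠ 0 and s′^n = f_n(x′, y′); that is, the map A(x,y,s) = (x′, y′, s′) carries points of the surface E_n : s^n = f_n(x,y) with s ≠ 0 to points of the same kind. Moreover, writing Z(x,y,s) = (x, y, ζ^{−2}s), one has Z(A(Z(x,y,s))) = A(x,y,s) for every such point. -/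

import Mathlib

/-- The polynomial `f_n(x,y) = (xy)^{n-1}(1-x)(1-y)(1-xy)^{n-1}`. -/
def fpoly (n : ℕ) {K : Type*} [CommRing K] (x y : K) : K :=
  (x * y) ^ (n - 1) * (1 - x) * (1 - y) * (1 - x * y) ^ (n - 1)

/-- The symmetry `A` of the surface `E_n : s^n = f_n(x,y)`, where `ζ` plays
the role of a primitive `2n`-th root of unity:
`A(x,y,s) = (1-x, 1/(1-xy), ζ(1-x)(1-y)x²y/(s(1-xy)))`. -/
def Amap {K : Type*} [Field K] (ζ : K) (p : K × K × K) : K × K × K :=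
  (1 - p.1, 1 / (1 - p.1 * p.2.1),
    ζ * (1 - p.1) * (1 - p.2.1) * p.1 ^ 2 * p.2.1 / (p.2.2 * (1 - p.1 * p.2.1)))

/-- The symmetry `Z(x,y,s) = (x, y, ζ^{-2} s)`, where `ζ²` plays the role of
the `n`-th root of unity `ζ_n`. -/
def Zmap {K : Type*} [Field K] (ζ : K) (p : K × K × K) : K × K × K :=
  (p.1, p.2.1, ζ ^ (-2 : ℤ) * p.2.2)

/-- Sections 5.6 and 5.7 of the paper: the map `A` carries points of
`E_n : s^n = f_n(x,y)` with `s ≠ 0` to points of the same kind (such points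
automatically satisfy `x,y ≠ 0`, `x,y ≠ 1`, `xy ≠ 1`), and on such points the
relation `Z ∘ A ∘ Z = A` holds. -/
theorem surface_symmetry
    {K : Type*} [Field K] (n : ℕ) (hn : 2 ≤ n) (ζ : K) (hζ : ζ ^ n = -1)
    (x y s : K) (hs : s ≠ 0) (heq : s ^ n = fpoly n x y) :
    (x ≠ 0 ∧ y ≠ 0 ∧ x ≠ 1 ∧ y ≠ 1 ∧ x * y ≠ 1) ∧
    (Amap ζ (x, y, s)).2.2 ≠ 0 ∧
    (Amap ζ (x, y, s)).2.2 ^ n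
      = fpoly n (Amap ζ (x, y, s)).1 (Amap ζ (x, y, s)).2.1 ∧
    Zmap ζ (Amap ζ (Zmap ζ (x, y, s))) = Amap ζ (x, y, s) := by
  obtain ⟨m, rfl⟩ : ∃ m, n = m + 2 := ⟨n - 2, by omega⟩
  have hζ0 : ζ ≠ 0 := by
    intro h; rw [h, zero_pow (by omega)] at hζ
    exact one_ne_zero (neg_eq_zero.mp hζ.symm)
  have hf : (x*y)^(m+1)*(1-x)*(1-y)*(1-x*y)^(m+1) ≠ 0 := by
    have h2 := pow_ne_zero (m+2) hs
    rw [heq] at h2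
    exact h2
  have hv : (1:K) - x * y ≠ 0 := fun h => hf (by rw [h]; simp)
  have h1y : (1:K) - y ≠ 0 := fun h => hf (by rw [h]; ring)
  have hu : (1:K) - x ≠ 0 := fun h => hf (by rw [h]; ring)
  have hx : x ≠ 0 := fun h => hf (by rw [h]; simp)
  have hy : y ≠ 0 := fun h => hf (by rw [h]; simp)
  have hx1 : (1:K) ≠ x := fun h => hu (by rw [← h]; ring)
  have hy1 : (1:K) ≠ y := fun h => h1y (by rw [← h]; ring)
  have hxy : (1:K) ≠ x * y := fun h => hv (by rw [← h]; ring)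
  refine ⟨⟨hx, hy, fun h => hx1 h.symm, fun h => hy1 h.symm, fun h => hxy h.symm⟩, ?_, ?_, ?_⟩
  · simp only [Amap]
    exact div_ne_zero (mul_ne_zero (mul_ne_zero (mul_ne_zero (mul_ne_zero hζ0 hu) h1y) (pow_ne_zero 2 hx)) hy) (mul_ne_zero hs hv)
  · simp only [Amap, fpoly, Nat.add_sub_cancel]
    rw [div_pow, mul_pow s, heq]
    simp only [fpoly, mul_pow, hζ, show m+2-1 = m+1 from rfl]
    have hRHS : ((1:K) - x) ^ (m+1) * (1/(1-x*y))^(m+1) * (1 - (1-x)) * (1 - 1/(1-x*y))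
          * (1 - (1-x)*(1/(1-x*y)))^(m+1)
        = ((1-x)^(m+1) * x * (-(x*y)) * (x*(1-y))^(m+1))
          / ((1-x*y)^(m+1) * (1-x*y) * (1-x*y)^(m+1)) := by
      rw [show (1:K) - 1/(1-x*y) = (-(x*y))/(1-x*y) by field_simp; ring,
          show (1:K) - (1-x)*(1/(1-x*y)) = (x*(1-y))/(1-x*y) by field_simp; ring]
      field_simp
      rw [one_div_pow, div_pow]
      field_simp
      ring
    rw [hRHS, div_eq_div_iff (by apply_rules [mul_ne_zero, pow_ne_zero])
      (by apply_rules [mul_ne_zero, pow_ne_zero])]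
    have key : ∀ (a b c X Y : K),
        -1 * a^(m+2) * b^(m+2) * (X^2)^(m+2) * Y^(m+2) * (c^(m+1) * c * c^(m+1))
        = a^(m+1) * X * -(X*Y) * (X*b)^(m+1)
          * (X^(m+1)*Y^(m+1)*a*b*c^(m+1)*c^(m+2)) := by
      intro a b c X Y; ring
    exact key (1-x) (1-y) (1-x*y) x y
  · simp only [Zmap, Amap, Prod.mk.injEq, true_and]
    have hz2 : (ζ:K) ^ (-2:ℤ) = (ζ^2)⁻¹ := by
      rw [zpow_neg, show ((2:ℤ)) = ((2:ℕ):ℤ) from rfl, zpow_natCast]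
    rw [hz2]
    field_simp
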